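/- arXiv:2202.11627 — 2 statements merged into one kernel-verified Lean document; each statement's English description precedes it below -/
import Mathlib

section
/- Let ℬ = 𝒟 ∪ 𝒟″, where 𝒟″ is the set of paths in ℰ containing exactly one catastrophe step C_k (for some k ≥ 2), possibly followed by further steps. Then for every path P ∈ ℰ there exists exactly one path Q ∈ ℬ with |Q| = |P| such that P and Q are D-equivalent. In other words, ℬ is a complete set of representatives of the D-equivalence classes of ℰ. -/
/-- Steps of a Dyck path with catastrophes: up-step `U`, down-step `D`,
and catastrophe step `C k` of size `k` (valid paths only use `k ≥ 2`). -/
inductive Step where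
  | U : Step
  | D : Step
  | C : ℕ → Step
  deriving DecidableEq

/-- The vertical displacement of a step. -/
def Step.val : Step → ℤ
  | .U => 1
  | .D => -1
  | .C k => -(k : ℤ)

/-- The height (ordinate) of the path after its first `i` steps. -/
def hgt (P : List Step) (i : ℕ) : ℤ := ((P.take i).map Step.val).sum

/-- `InE P` means `P` is a Dyck path with catastrophes (a member of ℰ):
it stays at height ≥ 0, ends on the x-axis, and every catastrophe step
`C k` has `k ≥ 2` and starts at height `k` (hence ends on the x-axis). -/
def InE (P : List Step) : Prop :=
  (∀ i, 0 ≤ hgt P i) ∧ hgt P P.length = 0 ∧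
    ∀ i k, P[i]? = some (Step.C k) → 2 ≤ k ∧ hgt P i = (k : ℤ)

/-- `(UD)^k`. -/
def UDpow (k : ℕ) : List Step := (List.replicate k [Step.U, Step.D]).flatten

/-- `(DU)^k`. -/
def DUpow (k : ℕ) : List Step := (List.replicate k [Step.D, Step.U]).flatten

/-- `U^k`. -/
def Upow (k : ℕ) : List Step := List.replicate k Step.U

/-- `C_s` with the convention `C_1 = D`. -/
def cfin (s : ℕ) : Step := if s = 1 then Step.D else Step.C s

/-- Test whether a step is a catastrophe step. -/
def isCatB : Step → Bool
  | .C _ => true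
  | _ => false

/-- The number of catastrophe steps in a path. -/
def catCount (P : List Step) : ℕ := P.countP isCatB

/-- Two paths are `D`-equivalent when their down-steps occur at the same positions. -/
def DEquiv (P Q : List Step) : Prop :=
  ∀ i : ℕ, P[i]? = some Step.D ↔ Q[i]? = some Step.D

/-- Membership in ℬ = 𝒟 ∪ 𝒟″ : either a Dyck path (no catastrophe), or a path of ℰ
containing exactly one catastrophe step. -/
def InB (P : List Step) : Prop :=
  InE P ∧ (catCount P = 0 ∨ catCount P = 1)



def toUD (s : Step) : Step := if s = Step.D then Step.D else Step.U

def dval : Step → ℤ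
  | .U => 0
  | .D => 0
  | .C k => (k : ℤ) + 1

lemma val_toUD (s : Step) : (toUD s).val = s.val + dval s := by
  cases s <;> simp [toUD, dval, Step.val]

lemma dval_nonneg (s : Step) : 0 ≤ dval s := by
  cases s <;> simp [dval] <;> positivity

lemma toUD_ne_C (s : Step) (k : ℕ) : toUD s ≠ Step.C k := by
  cases s <;> simp [toUD]

lemma toUD_eq_D_iff (s : Step) : toUD s = Step.D ↔ s = Step.D := by
  cases s <;> simp [toUD]

lemma toUD_cases (s : Step) : toUD s = Step.U ∨ toUD s = Step.D := by
  cases s <;> simp [toUD]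

lemma isCatB_toUD (s : Step) : isCatB (toUD s) = false := by
  cases s <;> simp [toUD, isCatB]

lemma mem_of_getElem? {l : List Step} {i : ℕ} {a : Step} (h : l[i]? = some a) : a ∈ l := by
  obtain ⟨h1, h2⟩ := List.getElem?_eq_some_iff.mp h
  exact h2 ▸ List.getElem_mem h1

lemma hgt_zero (L : List Step) : hgt L 0 = 0 := by simp [hgt]

lemma hgt_succ (L : List Step) (i : ℕ) :
    hgt L (i+1) = hgt L i + ((L[i]?).map Step.val).getD 0 := by
  unfold hgt
  rw [List.take_succ, List.map_append, List.sum_append]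
  cases h : L[i]? <;> simp [h]

lemma hgt_stable (L : List Step) (i : ℕ) (h : L.length ≤ i) : hgt L i = hgt L L.length := by
  unfold hgt; rw [List.take_of_length_le h, List.take_length]

lemma hgt_eq_of_agree {A B : List Step} (i : ℕ) (h : ∀ l, l < i → A[l]? = B[l]?) :
    hgt A i = hgt B i := by
  induction i with
  | zero => simp [hgt]
  | succ n ih =>
    rw [hgt_succ, hgt_succ, ih (fun l hl => h l (by omega)), h n (by omega)]

lemma hgt_sub_eq {A B : List Step} {j : ℕ} : ∀ i, j ≤ i →
    (∀ l, j ≤ l → l < i → A[l]? = B[l]?) →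
    hgt A i - hgt B i = hgt A j - hgt B j := by
  intro i
  induction i with
  | zero =>
    intro h _
    have hj0 : j = 0 := by omega
    rw [hj0]
  | succ n ih =>
    intro hj h
    rcases Nat.lt_or_ge j (n+1) with hlt | hge
    · have hjn : j ≤ n := by omega
      have hst := h n hjn (by omega)
      have hih := ih hjn (fun l h1 h2 => h l h1 (by omega))
      rw [hgt_succ A, hgt_succ B, hst]
      linarith
    · have : j = n+1 := by omega
      rw [this]

lemma sum_map_add (l : List Step) (g h : Step → ℤ) :
    (l.map fun s => g s + h s).sum = (l.map g).sum + (l.map h).sum := by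
  induction l with
  | nil => simp
  | cons a t ih => simp [ih]; ring

lemma hgt_mask (Q : List Step) (i : ℕ) :
    hgt (Q.map toUD) i = hgt Q i + ((Q.take i).map dval).sum := by
  unfold hgt
  rw [← List.map_take, List.map_map]
  have h1 : (Q.take i).map (Step.val ∘ toUD) = (Q.take i).map (fun s => Step.val s + dval s) := by
    apply List.map_congr_left
    intro s _
    exact val_toUD s
  rw [h1, sum_map_add]

lemma sum_dval_nonneg (l : List Step) : 0 ≤ (l.map dval).sum := by
  apply List.sum_nonneg
  intro x hx
  obtain ⟨s, _, rfl⟩ := List.mem_map.mp hx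
  exact dval_nonneg s

lemma sum_dval_zero_or_three (l : List Step) (h : ∀ s ∈ l, ∀ k, s = Step.C k → 2 ≤ k) :
    (l.map dval).sum = 0 ∨ 3 ≤ (l.map dval).sum := by
  induction l with
  | nil => simp
  | cons a t ih =>
    have ha : dval a = 0 ∨ 3 ≤ dval a := by
      cases a with
      | U => left; rfl
      | D => left; rfl
      | C k =>
        right
        have hk := h _ (List.mem_cons_self) k rfl
        simp only [dval]
        omega
    have ht := ih (fun s hs => h s (List.mem_cons_of_mem _ hs))
    have hnn := sum_dval_nonneg t
    simp only [List.map_cons, List.sum_cons]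
    omega

lemma catCount_zero_dval {l : List Step} (h : catCount l = 0) : (l.map dval).sum = 0 := by
  apply List.sum_eq_zero
  intro x hx
  obtain ⟨s, hs, rfl⟩ := List.mem_map.mp hx
  have := List.countP_eq_zero.mp h s hs
  cases s with
  | U => rfl
  | D => rfl
  | C k => simp [isCatB] at this

lemma two_le_catCount {l : List Step} {i j : ℕ} (hij : i < j) {a b : Step}
    (ha : l[i]? = some a) (hb : l[j]? = some b) (pa : isCatB a = true) (pb : isCatB b = true) :
    2 ≤ catCount l := by
  have hta : (l.take j)[i]? = some a := by rw [List.getElem?_take]; simp [hij, ha]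
  have hdb : (l.drop j)[0]? = some b := by rw [List.getElem?_drop]; simpa using hb
  have h1 : 0 < (l.take j).countP isCatB :=
    List.countP_pos_iff.mpr ⟨a, mem_of_getElem? hta, pa⟩
  have h2 : 0 < (l.drop j).countP isCatB :=
    List.countP_pos_iff.mpr ⟨b, mem_of_getElem? hdb, pb⟩
  have heq : catCount l = (l.take j).countP isCatB + (l.drop j).countP isCatB := by
    unfold catCount
    rw [← List.countP_append, List.take_append_drop]
  omega

lemma ivt (g : ℕ → ℤ) (hstep : ∀ i, g (i+1) ≤ g i + 1) (c : ℤ) :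
    ∀ n, g 0 ≤ c → c ≤ g n → ∃ i ≤ n, g i = c := by
  intro n
  induction n with
  | zero => intro h1 h2; exact ⟨0, le_refl _, le_antisymm h1 h2⟩
  | succ m ih =>
    intro h1 h2
    rcases le_or_gt c (g m) with h | h
    · obtain ⟨i, hi, hgi⟩ := ih h1 h
      exact ⟨i, by omega, hgi⟩
    · exact ⟨m+1, le_refl _, by have := hstep m; omega⟩

/-- ℬ is a complete set of representatives of the D-equivalence classes of ℰ. -/
theorem B_complete_set_of_representatives_for_DEquiv (P : List Step) (hP : InE P) :
    ∃! Q : List Step, InB Q ∧ Q.length = P.length ∧ DEquiv P Q := by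
  classical
  obtain ⟨hPnn, hPend, hPcat⟩ := hP
  set N := P.length with hN
  set M := P.map toUD with hMdef
  have hMlen : M.length = N := by simp [hMdef, hN]
  have hMget : ∀ i, M[i]? = (P[i]?).map toUD := fun i => List.getElem?_map
  have hfP : ∀ i, hgt M i = hgt P i + ((P.take i).map dval).sum := fun i => hgt_mask P i
  have hfnn : ∀ i, 0 ≤ hgt M i := by
    intro i; rw [hfP i]
    have h1 := hPnn i; have h2 := sum_dval_nonneg (P.take i); linarith
  have hstepup : ∀ i, hgt M (i+1) ≤ hgt M i + 1 := by
    intro i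
    rw [hgt_succ, hMget]
    cases h : P[i]? with
    | none => simp
    | some t => rcases toUD_cases t with h2 | h2 <;> simp [h2, Step.val]
  have hMD : ∀ i : ℕ, M[i]? = some Step.D ↔ P[i]? = some Step.D := by
    intro i
    rw [hMget]
    cases h : P[i]? with
    | none => simp
    | some s => simpa using toUD_eq_D_iff s
  have hMnc : ∀ a ∈ M, isCatB a = false := by
    intro a ha
    rw [hMdef] at ha
    obtain ⟨s, _, rfl⟩ := List.mem_map.mp ha
    exact isCatB_toUD s
  have hfN03 : hgt M N = 0 ∨ 3 ≤ hgt M N := by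
    have htake : P.take N = P := List.take_of_length_le (le_of_eq hN.symm)
    have h := hfP N
    rw [hPend, htake, zero_add] at h
    rw [h]
    apply sum_dval_zero_or_three
    intro s hs k hk
    subst hk
    obtain ⟨i, hi⟩ := List.getElem?_of_mem hs
    exact (hPcat i k hi).1
  -- any candidate agrees with M away from catastrophe positions
  have hagree : ∀ Q : List Step, Q.length = N → DEquiv P Q → ∀ i : ℕ,
      (∀ m', Q[i]? ≠ some (Step.C m')) → Q[i]? = M[i]? := by
    intro Q hlen hDE i hnc
    rcases Nat.lt_or_ge i N with hi | hi
    · have hiQ : i < Q.length := by omega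
      have hiP : i < P.length := by omega
      have hs : Q[i]? = some Q[i] := List.getElem?_eq_getElem hiQ
      have ht : P[i]? = some P[i] := List.getElem?_eq_getElem hiP
      have hMi : M[i]? = some (toUD P[i]) := by rw [hMget, ht]; rfl
      cases hq : Q[i] with
      | U =>
        have hPD : P[i]? ≠ some Step.D := by
          intro h
          have h2 := (hDE i).mp h
          rw [hs, hq] at h2
          exact Step.noConfusion (Option.some.inj h2)
        have hU : toUD P[i] = Step.U := by
          by_cases hd : P[i] = Step.D
          · exact absurd (by rw [ht, hd]) hPD
          · simp [toUD, hd]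
        rw [hs, hq, hMi, hU]
      | D =>
        have hPD : P[i]? = some Step.D := (hDE i).mpr (by rw [hs, hq])
        have hPi : P[i] = Step.D := Option.some.inj (ht ▸ hPD)
        rw [hs, hq, hMi, hPi]
        rfl
      | C m => exact absurd (hq ▸ hs) (hnc m)
    · rw [List.getElem?_eq_none (by omega), List.getElem?_eq_none (by omega)]
  -- structure of a candidate with exactly one catastrophe
  have hcat1 : ∀ Q : List Step, InE Q → Q.length = N → DEquiv P Q → catCount Q = 1 →
      ∃ j m, j < N ∧ Q[j]? = some (Step.C m) ∧ (∀ i, i ≠ j → Q[i]? = M[i]?) ∧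
        (m : ℤ) = hgt M N - 1 ∧ hgt M j = (m : ℤ) ∧
        (∀ i, j < i → i ≤ N → hgt M N ≤ hgt M i) := by
    intro Q hQ hlen hDE hc1
    obtain ⟨hQnn, hQend, hQcat⟩ := hQ
    have hpos : 0 < Q.countP isCatB := by unfold catCount at hc1; omega
    obtain ⟨s, hsmem, hscat⟩ := List.countP_pos_iff.mp hpos
    obtain ⟨j, hj⟩ := List.getElem?_of_mem hsmem
    obtain ⟨m, rfl⟩ : ∃ m, s = Step.C m := by
      cases s with
      | U => simp [isCatB] at hscat
      | D => simp [isCatB] at hscat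
      | C m => exact ⟨m, rfl⟩
    have hjN : j < N := by
      have := (List.getElem?_eq_some_iff.mp hj).1; omega
    have hother : ∀ i, i ≠ j → ∀ m', Q[i]? ≠ some (Step.C m') := by
      intro i hij m' h
      have h2 : 2 ≤ catCount Q := by
        rcases Nat.lt_or_gt_of_ne hij with hlt | hgt
        · exact two_le_catCount hlt h hj rfl rfl
        · exact two_le_catCount hgt hj h rfl rfl
      omega
    have hQM : ∀ i, i ≠ j → Q[i]? = M[i]? := fun i hi => hagree Q hlen hDE i (hother i hi)
    have h1 : hgt Q j = hgt M j := hgt_eq_of_agree j (fun l hl => hQM l (by omega))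
    have hhQj : hgt Q j = (m : ℤ) := (hQcat j m hj).2
    have hfj : hgt M j = (m : ℤ) := by rw [← h1]; exact hhQj
    have hQj1 : hgt Q (j+1) = 0 := by
      rw [hgt_succ, hj, hhQj]
      simp [Step.val]
    have hPjD : P[j]? ≠ some Step.D := by
      intro h
      have h2 := (hDE j).mp h
      rw [hj] at h2
      exact Step.noConfusion (Option.some.inj h2)
    have hMj1 : hgt M (j+1) = hgt M j + 1 := by
      have hjP : j < P.length := by omega
      have ht : P[j]? = some P[j] := List.getElem?_eq_getElem hjP
      have hU : toUD P[j] = Step.U := by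
        by_cases hd : P[j] = Step.D
        · exact absurd (by rw [ht, hd]) hPjD
        · simp [toUD, hd]
      rw [hgt_succ, hMget, ht]
      simp [hU, Step.val]
    have h2 : ∀ i, j+1 ≤ i → hgt Q i - hgt M i = -((m:ℤ)+1) := by
      intro i hi
      have h3 := hgt_sub_eq (A := Q) (B := M) i hi (fun l hl1 hl2 => hQM l (by omega))
      rw [hQj1, hMj1, hfj] at h3
      linarith
    have hQN : hgt Q N = 0 := by rw [hlen] at hQend; exact hQend
    have hfN : hgt M N = (m:ℤ) + 1 := by
      have h3 := h2 N (by omega)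
      linarith
    have hge : ∀ i, j < i → i ≤ N → hgt M N ≤ hgt M i := by
      intro i hi1 hi2
      have h3 := h2 i (by omega)
      have h4 := hQnn i
      linarith
    exact ⟨j, m, hjN, hj, hQM, by linarith, hfj, hge⟩
  rcases hfN03 with hA | hB
  · -- Case A : the Dyck path M is the unique representative
    refine ⟨M, ⟨⟨⟨hfnn, by rw [hMlen]; exact hA, ?_⟩, Or.inl ?_⟩, hMlen, fun i => (hMD i).symm⟩, ?_⟩
    · intro i k h
      rw [hMget] at h
      cases hp : P[i]? with
      | none => rw [hp] at h; simp at h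
      | some t => rw [hp] at h; exact absurd (Option.some.inj h) (toUD_ne_C t k)
    · exact List.countP_eq_zero.mpr (fun a ha => by simp [hMnc a ha])
    · rintro Q' ⟨⟨hQ'E, hc⟩, hlen', hDE'⟩
      rcases hc with h0 | h1
      · apply List.ext_getElem?
        intro i
        apply hagree Q' hlen' hDE'
        intro m' hm'
        have h2 : 0 < Q'.countP isCatB := List.countP_pos_iff.mpr ⟨_, mem_of_getElem? hm', rfl⟩
        unfold catCount at h0; omega
      · exfalso
        obtain ⟨j, m, _, _, _, hm, _, _⟩ := hcat1 Q' hQ'E hlen' hDE' h1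
        rw [hA] at hm
        omega
  · -- Case B : unique representative with one catastrophe
    obtain ⟨j₀, hj₀N, hfj₀⟩ := ivt (fun i => hgt M i) hstepup (hgt M N - 1) N
      (by show hgt M 0 ≤ hgt M N - 1; rw [hgt_zero]; linarith)
      (by show hgt M N - 1 ≤ hgt M N; linarith)
    set j := Nat.findGreatest (fun i => hgt M i = hgt M N - 1) N with hjdef
    have hjspec : hgt M j = hgt M N - 1 := by
      rw [hjdef]; exact Nat.findGreatest_spec (P := fun i => hgt M i = hgt M N - 1) hj₀N hfj₀
    have hjmax : ∀ i, j < i → i ≤ N → hgt M i ≠ hgt M N - 1 := by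
      intro i h1 h2
      rw [hjdef] at h1
      exact Nat.findGreatest_is_greatest (P := fun i => hgt M i = hgt M N - 1) h1 h2
    have hjle : j ≤ N := by rw [hjdef]; exact Nat.findGreatest_le (P := fun i => hgt M i = hgt M N - 1) N
    have hjN : j < N := by
      rcases Nat.lt_or_ge j N with h | h
      · exact h
      · exfalso
        have hjn : j = N := by omega
        rw [hjn] at hjspec
        linarith
    have hge : ∀ i, j < i → i ≤ N → hgt M N ≤ hgt M i := by
      intro i h1 h2
      by_contra hcon
      push_neg at hcon
      have hne := hjmax i h1 h2
      have hle : hgt M i ≤ hgt M N - 1 := by omega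
      obtain ⟨l, hl, hgl⟩ := ivt (fun l => hgt M (i + l))
        (fun l => by
          have h5 : i + (l+1) = (i+l) + 1 := by omega
          have h6 := hstepup (i + l)
          show hgt M (i + (l+1)) ≤ hgt M (i + l) + 1
          rw [h5]
          exact h6)
        (hgt M N - 1) (N - i) hle
        (by
          have h5 : i + (N - i) = N := by omega
          show hgt M N - 1 ≤ hgt M (i + (N - i))
          rw [h5]
          linarith)
      exact hjmax (i + l) (by omega) (by omega) hgl
    have hfj1 : hgt M (j+1) = hgt M j + 1 := by
      have h1 := hge (j+1) (by omega) (by omega)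
      have h2 := hstepup j
      linarith
    have hjP : j < P.length := by omega
    have htP : P[j]? = some P[j] := List.getElem?_eq_getElem hjP
    have htU : toUD P[j] = Step.U := by
      rcases toUD_cases P[j] with h | h
      · exact h
      · exfalso
        have h3 : hgt M (j+1) = hgt M j + (-1) := by
          rw [hgt_succ, hMget, htP]
          simp [h, Step.val]
        linarith
    have hPjD : P[j]? ≠ some Step.D := by
      rw [htP]
      intro h
      have h2 := Option.some.inj h
      rw [h2] at htU
      simp [toUD] at htU
    set k : ℕ := (hgt M N - 1).toNat with hkdef
    have hkc : (k : ℤ) = hgt M N - 1 := Int.toNat_of_nonneg (by linarith)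
    have hk2 : 2 ≤ k := by omega
    set Q : List Step := M.take j ++ Step.C k :: M.drop (j+1) with hQdef
    have hlen_take : (M.take j).length = j := by rw [List.length_take]; omega
    have hQget : ∀ i : ℕ, Q[i]? = if i = j then some (Step.C k) else M[i]? := by
      intro i
      rcases lt_trichotomy i j with h | h | h
      · rw [if_neg (by omega), hQdef, List.getElem?_append, if_pos (by omega)]
        rw [List.getElem?_take, if_pos h]
      · subst h
        rw [if_pos rfl, hQdef, List.getElem?_append, if_neg (by omega)]
        simp [hlen_take]
      · rw [if_neg (by omega), hQdef, List.getElem?_append, if_neg (by omega), hlen_take]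
        have h1 : i - j = (i - j - 1) + 1 := by omega
        rw [h1]
        simp only [List.getElem?_cons_succ]
        rw [List.getElem?_drop]
        congr 1
        omega
    have hQlen : Q.length = N := by
      rw [hQdef]
      simp [List.length_append, List.length_drop, hlen_take, hMlen]
      omega
    have hQle : ∀ i, i ≤ j → hgt Q i = hgt M i :=
      fun i hi => hgt_eq_of_agree i (fun l hl => by rw [hQget, if_neg (by omega)])
    have hQj1 : hgt Q (j+1) = 0 := by
      rw [hgt_succ, hQget, if_pos rfl]
      simp only [Option.map_some, Option.getD_some, Step.val]
      rw [hQle j le_rfl, hjspec, hkc]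
      ring
    have hQgt : ∀ i, j+1 ≤ i → hgt Q i = hgt M i - hgt M N := by
      intro i hi
      have h3 := hgt_sub_eq (A := Q) (B := M) i hi
        (fun l hl1 hl2 => by rw [hQget, if_neg (by omega)])
      rw [hQj1, hfj1, hjspec] at h3
      linarith
    have hQN : hgt Q N = 0 := by rw [hQgt N (by omega)]; ring
    have hQcatpos : ∀ (i c : ℕ), Q[i]? = some (Step.C c) → i = j ∧ c = k := by
      intro i c h
      rw [hQget] at h
      by_cases hij : i = j
      · rw [if_pos hij] at h
        exact ⟨hij, (Step.C.inj (Option.some.inj h)).symm⟩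
      · rw [if_neg hij, hMget] at h
        cases hp : P[i]? with
        | none => rw [hp] at h; simp at h
        | some t => rw [hp] at h; exact absurd (Option.some.inj h) (toUD_ne_C t c)
    refine ⟨Q, ⟨⟨⟨?_, ?_, ?_⟩, Or.inr ?_⟩, hQlen, ?_⟩, ?_⟩
    · intro i
      rcases le_or_gt i j with h | h
      · rw [hQle i h]; exact hfnn i
      · rcases le_or_gt i N with h2 | h2
        · rw [hQgt i (by omega)]
          have h3 := hge i h h2
          linarith
        · rw [hgt_stable Q i (by omega), hQlen, hQN]
    · rw [hQlen]
      exact hQN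
    · intro i c h
      obtain ⟨rfl, rfl⟩ := hQcatpos i c h
      refine ⟨hk2, ?_⟩
      rw [hQle j le_rfl, hjspec, hkc]
    · rw [hQdef]
      unfold catCount
      rw [List.countP_append, List.countP_cons]
      have h1 : (M.take j).countP isCatB = 0 :=
        List.countP_eq_zero.mpr (fun a ha => by
          simp [hMnc a ((List.take_sublist j M).subset ha)])
      have h2 : (M.drop (j+1)).countP isCatB = 0 :=
        List.countP_eq_zero.mpr (fun a ha => by
          simp [hMnc a ((List.drop_sublist (j+1) M).subset ha)])
      simp [h1, h2, isCatB]
    · intro i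
      rw [hQget]
      by_cases hij : i = j
      · subst hij
        rw [if_pos rfl]
        constructor
        · intro h; exact absurd h hPjD
        · intro h; exact Step.noConfusion (Option.some.inj h)
      · rw [if_neg hij]
        exact (hMD i).symm
    · rintro Q' ⟨⟨hQ'E, hc⟩, hlen', hDE'⟩
      rcases hc with h0 | h1
      · exfalso
        have hQ'M : ∀ i : ℕ, Q'[i]? = M[i]? := by
          intro i
          apply hagree Q' hlen' hDE'
          intro m' hm'
          have h2 : 0 < Q'.countP isCatB := List.countP_pos_iff.mpr ⟨_, mem_of_getElem? hm', rfl⟩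
          unfold catCount at h0; omega
        have h3 : hgt Q' N = hgt M N := hgt_eq_of_agree N (fun l _ => hQ'M l)
        have hQ'end := hQ'E.2.1
        rw [hlen'] at hQ'end
        linarith
      · obtain ⟨j', m, hj'N, hj', hQ'M, hm, hfj', hge'⟩ := hcat1 Q' hQ'E hlen' hDE' h1
        have hjj : j' = j := by
          rcases lt_trichotomy j' j with h | h | h
          · exfalso
            have h3 := hge' j h hjle
            rw [hjspec] at h3
            linarith
          · exact h
          · exact absurd (by rw [hfj', hm]) (hjmax j' h (by omega))
        have hmk : m = k := by omega
        apply List.ext_getElem?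
        intro i
        by_cases hij : i = j
        · subst hij
          rw [hQget, if_pos rfl, ← hjj, hj', hmk]
        · rw [hQget, if_neg hij, hQ'M i (by omega)]
end

section
/- Let 𝒞 be the set of paths in ℰ of the form (i) (UD)^k for some k ≥ 0, or (ii) (UD)^{ℓ_1}U^{k_1}C_{k_1}(UD)^{ℓ_2}U^{k_2}C_{k_2}⋯(UD)^{ℓ_r}U^{k_r}C_{k_r}(UD)^{ℓ_{r+1}} with r ≥ 1, ℓ_i ≥ 0 for 1 ≤ i ≤ r+1, and k_i ≥ 2 for 1 ≤ i ≤ r. Then for every path P ∈ ℰ there exists exactly one path Q ∈ 𝒞 with |Q| = |P| such that P and Q are C-equivalent. In other words, 𝒞 is a complete set of representatives of the C-equivalence classes of ℰ. -/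
/-- Two paths are `C`-equivalent when, for every `k ≥ 2`, the catastrophe
steps `C k` occur at the same positions in both paths. -/
def CEquiv (P Q : List Step) : Prop :=
  ∀ k, 2 ≤ k → ∀ i : ℕ, P[i]? = some (Step.C k) ↔ Q[i]? = some (Step.C k)

/-- Membership in 𝒞 : paths of the form
`(UD)^{ℓ_1} U^{k_1} C_{k_1} ⋯ (UD)^{ℓ_r} U^{k_r} C_{k_r} (UD)^{ℓ_{r+1}}`
with `r ≥ 0` and all `k_i ≥ 2` (the case `r = 0` giving `(UD)^k`). -/
def InC (P : List Step) : Prop :=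
  ∃ (L : List (ℕ × ℕ)) (m : ℕ),
    (∀ p ∈ L, 2 ≤ p.2) ∧
    P = (L.map (fun p => UDpow p.1 ++ Upow p.2 ++ [Step.C p.2])).flatten ++ UDpow m

-- helpers
lemma hgt_of_length_le {P : List Step} {i : ℕ} (h : P.length ≤ i) : hgt P i = hgt P P.length := by
  simp [hgt, List.take_of_length_le h]

lemma hgt_take (P : List Step) (n j : ℕ) : hgt (P.take n) j = hgt P (min j n) := by
  simp [hgt, List.take_take]

lemma hgt_append_add (A B : List Step) (j : ℕ) :
    hgt (A ++ B) (A.length + j) = hgt A A.length + hgt B j := by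
  simp [hgt, List.take_add, List.take_length]

lemma hgt_append_left {A : List Step} (B : List Step) {i : ℕ} (h : i ≤ A.length) :
    hgt (A ++ B) i = hgt A i := by
  simp [hgt, List.take_append_of_le_length h]

lemma hgt_append_right {A : List Step} (B : List Step) {i : ℕ} (h : A.length ≤ i) :
    hgt (A ++ B) i = hgt A A.length + hgt B (i - A.length) := by
  have := hgt_append_add A B (i - A.length)
  rwa [Nat.add_sub_cancel' h] at this

lemma hgt_drop (P : List Step) (n j : ℕ) : hgt (P.drop n) j = hgt P (n + j) - hgt P n := by
  have : hgt P (n + j) = hgt P n + hgt (P.drop n) j := by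
    simp [hgt, List.take_add]
  omega

lemma hgt_succ_s4 {P : List Step} {i : ℕ} {s : Step} (h : P[i]? = some s) :
    hgt P (i + 1) = hgt P i + s.val := by
  simp [hgt, List.take_succ, h]

lemma parity_lemma : ∀ (P : List Step), (∀ s ∈ P, Step.val s = 1 ∨ Step.val s = -1) →
    ∃ ℓ : ℕ, (P.length : ℤ) = 2 * ℓ + hgt P P.length := by
  intro P
  induction P with
  | nil => intro _; exact ⟨0, by simp [hgt]⟩
  | cons a l ih =>
    intro h
    obtain ⟨ℓ, hℓ⟩ := ih (fun s hs => h s (List.mem_cons_of_mem a hs))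
    have hl : hgt (a :: l) (l.length + 1) = a.val + hgt l l.length := by
      simp [hgt]
    rcases h a List.mem_cons_self with ha | ha
    · exact ⟨ℓ, by simp only [List.length_cons, hl, ha]; push_cast; omega⟩
    · exact ⟨ℓ + 1, by simp only [List.length_cons, hl, ha]; push_cast; omega⟩

lemma UDpow_succ (k : ℕ) : UDpow (k + 1) = Step.U :: Step.D :: UDpow k := by
  simp [UDpow, List.replicate_succ]

lemma length_UDpow (k : ℕ) : (UDpow k).length = 2 * k := by
  simp [UDpow]; ring

lemma mem_UDpow {s : Step} {k : ℕ} (h : s ∈ UDpow k) : s = Step.U ∨ s = Step.D := by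
  simp [UDpow, List.mem_flatten, List.mem_replicate] at h
  tauto

lemma length_Upow (k : ℕ) : (Upow k).length = k := by simp [Upow]

lemma mem_Upow {s : Step} {k : ℕ} (h : s ∈ Upow k) : s = Step.U := by
  simpa [Upow] using (List.eq_of_mem_replicate h)

lemma hgt_Upow (k j : ℕ) : hgt (Upow k) j = ((min j k : ℕ) : ℤ) := by
  simp [hgt, Upow, List.take_replicate, Step.val, List.map_replicate]

lemma InE_append {A B : List Step} (hA : InE A) (hB : InE B) : InE (A ++ B) := by
  obtain ⟨hA1, hA2, hA3⟩ := hA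
  obtain ⟨hB1, hB2, hB3⟩ := hB
  refine ⟨?_, ?_, ?_⟩
  · intro i
    rcases le_or_gt i A.length with h | h
    · rw [hgt_append_left B h]; exact hA1 i
    · rw [hgt_append_right B h.le, hA2]; simpa using hB1 _
  · rw [List.length_append, hgt_append_add, hA2, hB2]; ring
  · intro i k h
    rcases lt_or_ge i A.length with hi | hi
    · rw [List.getElem?_append_left hi] at h
      obtain ⟨h2, h3⟩ := hA3 i k h
      exact ⟨h2, by rwa [hgt_append_left B hi.le]⟩
    · rw [List.getElem?_append_right hi] at h
      obtain ⟨h2, h3⟩ := hB3 _ k h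
      exact ⟨h2, by rw [hgt_append_right B hi, hA2, h3]; ring⟩

lemma InE_UD : InE [Step.U, Step.D] := by
  refine ⟨?_, by simp [hgt, Step.val], ?_⟩
  · intro i
    match i with
    | 0 => simp [hgt]
    | 1 => simp [hgt, Step.val]
    | n + 2 =>
      rw [hgt_of_length_le (by simp)]
      simp [hgt, Step.val]
  · intro i k h
    match i with
    | 0 => simp at h
    | 1 => simp at h
    | n + 2 => simp at h

lemma InE_UDpow (k : ℕ) : InE (UDpow k) := by
  induction k with
  | zero => exact ⟨fun i => by simp [hgt, UDpow], by simp [hgt, UDpow], fun i k h => by simp [UDpow] at h⟩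
  | succ n ih =>
    have : UDpow (n + 1) = [Step.U, Step.D] ++ UDpow n := by rw [UDpow_succ]; rfl
    rw [this]
    exact InE_append InE_UD ih

lemma InE_UpowC {k : ℕ} (hk : 2 ≤ k) : InE (Upow k ++ [Step.C k]) := by
  have hlen : (Upow k).length = k := length_Upow k
  refine ⟨?_, ?_, ?_⟩
  · intro i
    rcases le_or_gt i k with h | h
    · rw [hgt_append_left _ (by omega), hgt_Upow]; positivity
    · rw [hgt_append_right _ (by omega), hlen, hgt_Upow]
      have h1 : hgt [Step.C k] (i - k) = -(k : ℤ) := by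
        have : 1 ≤ i - k := by omega
        rw [hgt_of_length_le (by simpa using this)]
        simp [hgt, Step.val]
      rw [h1]; simp
  · rw [List.length_append, hlen]
    rw [hgt_append_right _ (by simp [hlen]), hlen, hgt_Upow]
    simp [hgt, Step.val]
  · intro i k' h
    rcases lt_or_ge i k with hi | hi
    · rw [List.getElem?_append_left (by omega)] at h
      exact absurd (mem_Upow (List.mem_of_getElem? h)) (by simp)
    · rw [List.getElem?_append_right (by omega), hlen] at h
      rcases eq_or_lt_of_le hi with h' | h'
      · have hik : i = k := h'.symm
        subst hik
        rw [Nat.sub_self] at h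
        simp only [List.getElem?_cons_zero, Option.some.injEq, Step.C.injEq] at h
        subst h
        exact ⟨hk, by rw [hgt_append_left _ (by omega), hgt_Upow]; simp⟩
      · exfalso
        have h1 : 1 ≤ i - k := by omega
        rw [List.getElem?_eq_none (by simpa using h1)] at h
        simp at h

lemma length_blockpre (ℓ k : ℕ) : (UDpow ℓ ++ Upow k).length = 2 * ℓ + k := by
  simp [length_UDpow, length_Upow]

lemma length_block (ℓ k : ℕ) : (UDpow ℓ ++ Upow k ++ [Step.C k]).length = 2 * ℓ + k + 1 := by
  simp [length_UDpow, length_Upow]; omega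

lemma mem_blockpre {s : Step} {ℓ k : ℕ} (h : s ∈ UDpow ℓ ++ Upow k) : s = Step.U ∨ s = Step.D := by
  rcases List.mem_append.mp h with h | h
  · exact mem_UDpow h
  · exact Or.inl (mem_Upow h)

lemma block_getElem {ℓ k j k' : ℕ} :
    (UDpow ℓ ++ Upow k ++ [Step.C k])[j]? = some (Step.C k') ↔ j = 2 * ℓ + k ∧ k' = k := by
  constructor
  · intro h
    rcases lt_or_ge j (2 * ℓ + k) with hj | hj
    · rw [List.getElem?_append_left (by rw [length_blockpre]; omega)] at h
      exact absurd (mem_blockpre (List.mem_of_getElem? h)) (by simp)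
    · rw [List.getElem?_append_right (by rw [length_blockpre]; omega), length_blockpre] at h
      rcases eq_or_lt_of_le hj with h' | h'
      · rw [← h', Nat.sub_self] at h
        simp only [List.getElem?_cons_zero, Option.some.injEq, Step.C.injEq] at h
        exact ⟨h'.symm, h.symm⟩
      · exfalso
        rw [List.getElem?_eq_none (by simp; omega)] at h
        simp at h
  · rintro ⟨rfl, rfl⟩
    rw [List.getElem?_append_right (by rw [length_blockpre]), length_blockpre, Nat.sub_self]
    rfl

def canon (L : List (ℕ × ℕ)) (m : ℕ) : List Step :=
  (L.map (fun p => UDpow p.1 ++ Upow p.2 ++ [Step.C p.2])).flatten ++ UDpow m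

lemma canon_nil (m : ℕ) : canon [] m = UDpow m := by simp [canon]

lemma canon_cons (ℓ k : ℕ) (L : List (ℕ × ℕ)) (m : ℕ) :
    canon ((ℓ, k) :: L) m = (UDpow ℓ ++ Upow k ++ [Step.C k]) ++ canon L m := by
  simp [canon]

lemma noC_UDpow {m j k : ℕ} (h : (UDpow m)[j]? = some (Step.C k)) : False :=
  absurd (mem_UDpow (List.mem_of_getElem? h)) (by simp)

lemma canon_cons_getElem (ℓ k : ℕ) (L : List (ℕ × ℕ)) (m : ℕ) :
    (canon ((ℓ, k) :: L) m)[2 * ℓ + k]? = some (Step.C k) := by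
  rw [canon_cons, List.getElem?_append_left (by rw [length_block]; omega)]
  exact block_getElem.mpr ⟨rfl, rfl⟩

lemma canon_cons_getElem_ge {ℓ k j k' : ℕ} {L : List (ℕ × ℕ)} {m : ℕ}
    (h : (canon ((ℓ, k) :: L) m)[j]? = some (Step.C k')) : 2 * ℓ + k ≤ j := by
  by_contra hj
  push_neg at hj
  rw [canon_cons, List.getElem?_append_left (by rw [length_block]; omega),
    List.getElem?_append_left (by rw [length_blockpre]; omega)] at h
  exact absurd (mem_blockpre (List.mem_of_getElem? h)) (by simp)

lemma append_cancel_CEquiv {A T1 T2 : List Step}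
    (hlen : (A ++ T1).length = (A ++ T2).length) (hCE : CEquiv (A ++ T1) (A ++ T2)) :
    T1.length = T2.length ∧ CEquiv T1 T2 := by
  constructor
  · simp only [List.length_append] at hlen; omega
  · intro k hk j
    have := hCE k hk (A.length + j)
    rwa [List.getElem?_append_right (Nat.le_add_right _ _),
      List.getElem?_append_right (Nat.le_add_right _ _), Nat.add_sub_cancel_left] at this

lemma canon_inj : ∀ (L1 L2 : List (ℕ × ℕ)) (m1 m2 : ℕ),
    (∀ p ∈ L1, 2 ≤ p.2) → (∀ p ∈ L2, 2 ≤ p.2) →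
    (canon L1 m1).length = (canon L2 m2).length →
    CEquiv (canon L1 m1) (canon L2 m2) →
    canon L1 m1 = canon L2 m2 := by
  intro L1
  induction L1 with
  | nil =>
    intro L2 m1 m2 _ h2 hlen hCE
    match L2 with
    | [] =>
      rw [canon_nil, canon_nil] at hlen ⊢
      rw [length_UDpow, length_UDpow] at hlen
      obtain rfl : m1 = m2 := by omega
      rfl
    | (ℓ, k) :: t =>
      exfalso
      have hk : 2 ≤ k := h2 (ℓ, k) List.mem_cons_self
      have := (hCE k hk (2 * ℓ + k)).mpr (canon_cons_getElem ℓ k t m2)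
      rw [canon_nil] at this
      exact noC_UDpow this
  | cons p t ih =>
    obtain ⟨ℓ1, k1⟩ := p
    intro L2 m1 m2 h1 h2 hlen hCE
    match L2 with
    | [] =>
      exfalso
      have hk : 2 ≤ k1 := h1 (ℓ1, k1) List.mem_cons_self
      have := (hCE k1 hk (2 * ℓ1 + k1)).mp (canon_cons_getElem ℓ1 k1 t m1)
      rw [canon_nil] at this
      exact noC_UDpow this
    | (ℓ2, k2) :: t2 =>
      have hk1 : 2 ≤ k1 := h1 (ℓ1, k1) List.mem_cons_self
      have hk2 : 2 ≤ k2 := h2 (ℓ2, k2) List.mem_cons_self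
      have f1 := (hCE k1 hk1 (2 * ℓ1 + k1)).mp (canon_cons_getElem ℓ1 k1 t m1)
      have f2 := (hCE k2 hk2 (2 * ℓ2 + k2)).mpr (canon_cons_getElem ℓ2 k2 t2 m2)
      have g1 : 2 * ℓ2 + k2 ≤ 2 * ℓ1 + k1 := canon_cons_getElem_ge f1
      have g2 : 2 * ℓ1 + k1 ≤ 2 * ℓ2 + k2 := canon_cons_getElem_ge f2
      have heq : 2 * ℓ1 + k1 = 2 * ℓ2 + k2 := le_antisymm g2 g1
      rw [canon_cons, heq, List.getElem?_append_left (by rw [length_block]; omega)] at f1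
      obtain ⟨_, hkk⟩ := block_getElem.mp f1
      obtain rfl : k2 = k1 := hkk.symm
      obtain rfl : ℓ2 = ℓ1 := by omega
      rw [canon_cons, canon_cons] at hlen hCE ⊢
      congr 1
      obtain ⟨hl, hc⟩ := append_cancel_CEquiv hlen hCE
      exact ih t2 m1 m2 (fun q hq => h1 q (List.mem_cons_of_mem _ hq))
        (fun q hq => h2 q (List.mem_cons_of_mem _ hq)) hl hc

lemma InE_block {ℓ k : ℕ} (hk : 2 ≤ k) : InE (UDpow ℓ ++ Upow k ++ [Step.C k]) := by
  rw [List.append_assoc]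
  exact InE_append (InE_UDpow ℓ) (InE_UpowC hk)

lemma exists_rep (n : ℕ) : ∀ (P : List Step), P.length ≤ n → InE P →
    ∃ Q, (InE Q ∧ InC Q) ∧ Q.length = P.length ∧ CEquiv P Q := by
  induction n using Nat.strong_induction_on with
  | _ n ih =>
    intro P hlen hP
    by_cases hc : ∃ x ∈ P, isCatB x
    · set i := P.findIdx isCatB with hi_def
      have hi : i < P.length := List.findIdx_lt_length_of_exists hc
      have hcat : isCatB (P[i]'hi) = true := List.findIdx_getElem (w := hi)
      obtain ⟨k, hk⟩ : ∃ k, P[i]'hi = Step.C k := by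
        cases h : P[i]'hi with
        | U => rw [h] at hcat; simp [isCatB] at hcat
        | D => rw [h] at hcat; simp [isCatB] at hcat
        | C k => exact ⟨k, rfl⟩
      have hPi : P[i]? = some (Step.C k) := by rw [List.getElem?_eq_getElem hi, hk]
      obtain ⟨hk2, hhi⟩ := hP.2.2 i k hPi
      have hpre : ∀ j (h : j < i), isCatB (P[j]'(lt_trans h hi)) = false :=
        fun j h => List.not_of_lt_findIdx h
      have hAlen : (P.take i).length = i := by rw [List.length_take]; omega
      have hA : ∀ s ∈ P.take i, Step.val s = 1 ∨ Step.val s = -1 := by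
        intro s hs
        obtain ⟨j, hj, hjs⟩ := List.mem_iff_getElem.mp hs
        have hj' : j < i := by omega
        have hg : (P.take i)[j] = P[j]'(lt_trans hj' hi) := List.getElem_take
        have := hpre j hj'
        rw [← hg, hjs] at this
        cases s <;> simp [Step.val] <;> simp [isCatB] at this
      obtain ⟨ℓ, hℓ⟩ := parity_lemma _ hA
      have hAh : hgt (P.take i) (P.take i).length = (k : ℤ) := by
        rw [hAlen, hgt_take, min_self, hhi]
      have hiℓ : i = 2 * ℓ + k := by
        simp only [hAlen, hgt_take, min_self, hhi] at hℓ
        exact_mod_cast hℓ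
      have h0 : hgt P (i + 1) = 0 := by rw [hgt_succ_s4 hPi, hhi]; simp [Step.val]
      have hRg : ∀ j, hgt (P.drop (i + 1)) j = hgt P (i + 1 + j) := by
        intro j; rw [hgt_drop, h0]; ring
      have hR : InE (P.drop (i + 1)) := by
        refine ⟨fun j => by rw [hRg]; exact hP.1 _, ?_, ?_⟩
        · rw [List.length_drop, hRg]
          have : i + 1 + (P.length - (i + 1)) = P.length := by omega
          rw [this]; exact hP.2.1
        · intro j k' h
          rw [List.getElem?_drop] at h
          obtain ⟨a, b⟩ := hP.2.2 _ _ h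
          exact ⟨a, by rw [hRg]; exact b⟩
      obtain ⟨Q', ⟨hQ'E, hQ'C⟩, hQ'len, hQ'CE⟩ :=
        ih (P.drop (i + 1)).length (by rw [List.length_drop]; omega) _ le_rfl hR
      obtain ⟨L', m', hL', hQ'eq⟩ := hQ'C
      refine ⟨(UDpow ℓ ++ Upow k ++ [Step.C k]) ++ Q', ⟨?_, ?_⟩, ?_, ?_⟩
      · exact InE_append (InE_block hk2) hQ'E
      · refine ⟨(ℓ, k) :: L', m', ?_, ?_⟩
        · intro q hq
          rcases List.mem_cons.mp hq with rfl | hq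
          · exact hk2
          · exact hL' q hq
        · rw [hQ'eq]; simp [List.append_assoc]
      · simp only [List.length_append, length_UDpow, length_Upow, List.length_singleton,
          hQ'len, List.length_drop]
        omega
      · intro k' hk' j
        rcases lt_trichotomy j i with hj | hj | hj
        · constructor
          · intro h
            exfalso
            rw [List.getElem?_eq_getElem (lt_trans hj hi)] at h
            have h' : P[j]'(lt_trans hj hi) = Step.C k' := by simpa using h
            have := hpre j hj
            rw [h'] at this
            simp [isCatB] at this
          · intro h
            exfalso
            rw [List.getElem?_append_left (by rw [length_block]; omega)] at h
            obtain ⟨hj', _⟩ := block_getElem.mp h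
            omega
        · subst hj
          constructor
          · intro h
            rw [hPi] at h
            have : k' = k := by simpa using h.symm
            subst this
            rw [List.getElem?_append_left (by rw [length_block]; omega)]
            exact block_getElem.mpr ⟨hiℓ, rfl⟩
          · intro h
            rw [List.getElem?_append_left (by rw [length_block]; omega)] at h
            obtain ⟨_, rfl⟩ := block_getElem.mp h
            exact hPi
        · have e1 : P[j]? = (P.drop (i + 1))[j - (i + 1)]? := by
            rw [List.getElem?_drop]; congr 1; omega
          have e2 : ((UDpow ℓ ++ Upow k ++ [Step.C k]) ++ Q')[j]? = Q'[j - (i + 1)]? := by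
            rw [List.getElem?_append_right (by rw [length_block]; omega), length_block]
            congr 1; omega
          rw [e1, e2]
          exact hQ'CE k' hk' (j - (i + 1))
    · have hud : ∀ s ∈ P, Step.val s = 1 ∨ Step.val s = -1 := by
        intro s hs
        have h' : isCatB s = false := by
          by_contra h'
          exact hc ⟨s, hs, by simpa using h'⟩
        cases s <;> simp [Step.val] <;> simp [isCatB] at h'
      obtain ⟨m, hm⟩ := parity_lemma P hud
      rw [hP.2.1] at hm
      have hPl : P.length = 2 * m := by push_cast at hm; exact_mod_cast (by omega : (P.length : ℤ) = 2 * m)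
      refine ⟨UDpow m, ⟨InE_UDpow m, ⟨[], m, by simp, by simp⟩⟩, by rw [length_UDpow, hPl], ?_⟩
      intro k hk j
      constructor
      · intro h
        exact absurd (⟨_, List.mem_of_getElem? h, rfl⟩ : ∃ x ∈ P, isCatB x = true) hc
      · intro h
        exact absurd h (fun h => noC_UDpow h)


/-- 𝒞 is a complete set of representatives of the C-equivalence classes of ℰ. -/
theorem C_complete_set_of_representatives_for_CEquiv (P : List Step) (hP : InE P) :
    ∃! Q : List Step, (InE Q ∧ InC Q) ∧ Q.length = P.length ∧ CEquiv P Q := by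
  obtain ⟨Q, hQ⟩ := exists_rep P.length P le_rfl hP
  refine ⟨Q, hQ, ?_⟩
  rintro Q2 ⟨⟨hQ2E, hQ2C⟩, hQ2len, hQ2CE⟩
  obtain ⟨⟨hQE, hQC⟩, hQlen, hQCE⟩ := hQ
  obtain ⟨L1, m1, h1, e1⟩ := hQ2C
  obtain ⟨L2, m2, h2, e2⟩ := hQC
  have key : canon L1 m1 = canon L2 m2 := by
    apply canon_inj L1 L2 m1 m2 h1 h2
    · show ((L1.map _).flatten ++ UDpow m1).length = ((L2.map _).flatten ++ UDpow m2).length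
      rw [← e1, ← e2, hQ2len, hQlen]
    · show CEquiv ((L1.map _).flatten ++ UDpow m1) ((L2.map _).flatten ++ UDpow m2)
      rw [← e1, ← e2]
      intro k hk i
      exact (hQ2CE k hk i).symm.trans (hQCE k hk i)
  rw [e1, e2]
  exact key
end
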